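/- Let L: ℝ^d → ℝ be twice continuously differentiable, let θ*, θ̂ ∈ ℝ^d, and let H be a positive definite d×d matrix such that ∇²L(θ) ⪰ (1/3)H for all θ on the segment joining θ* and θ̂. If moreover ⟨∇L(θ̂), θ̂ − θ*⟩ ≤ 0, then ‖θ̂ − θ*‖_H ≤ 3‖∇L(θ*)‖_{H^{-1}}. -/

import Mathlib

open Matrix

lemma cs_aux (d : ℕ) (H : Matrix (Fin d) (Fin d) ℝ) (hH : H.PosDef) (u g : Fin d → ℝ) :
    (u ⬝ᵥ g) ^ 2 ≤ (u ⬝ᵥ H *ᵥ u) * (g ⬝ᵥ H⁻¹ *ᵥ g) := by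
  have hdet : IsUnit H.det := isUnit_iff_ne_zero.mpr (ne_of_gt hH.det_pos)
  have hinv : H⁻¹.PosSemidef := hH.posSemidef.inv
  have hT : Hᵀ = H := by
    rw [← conjTranspose_eq_transpose_of_trivial, hH.isHermitian.eq]
  have hsym : ∀ v w : Fin d → ℝ, (H *ᵥ v) ⬝ᵥ w = v ⬝ᵥ (H *ᵥ w) := by
    intro v w
    calc (H *ᵥ v) ⬝ᵥ w = w ⬝ᵥ (H *ᵥ v) := dotProduct_comm _ _
    _ = (w ᵥ* H) ⬝ᵥ v := dotProduct_mulVec _ _ _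
    _ = (Hᵀ *ᵥ w) ⬝ᵥ v := by rw [mulVec_transpose]
    _ = (H *ᵥ w) ⬝ᵥ v := by rw [hT]
    _ = v ⬝ᵥ (H *ᵥ w) := dotProduct_comm _ _
  have hIH : ∀ v : Fin d → ℝ, H⁻¹ *ᵥ (H *ᵥ v) = v := by
    intro v; rw [mulVec_mulVec, nonsing_inv_mul H hdet, one_mulVec]
  have hHI : ∀ v : Fin d → ℝ, H *ᵥ (H⁻¹ *ᵥ v) = v := by
    intro v; rw [mulVec_mulVec, mul_nonsing_inv H hdet, one_mulVec]
  set A := u ⬝ᵥ H *ᵥ u with hA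
  set B := g ⬝ᵥ H⁻¹ *ᵥ g with hB
  set C := u ⬝ᵥ g with hC
  rcases eq_or_ne u 0 with hu | hu
  · simp [hC, hA, hu]
  · have hApos : 0 < A := by
      have := hH.dotProduct_mulVec_pos hu
      rwa [star_trivial] at this
    have key := hinv.dotProduct_mulVec_nonneg (g - (C / A) • (H *ᵥ u))
    rw [star_trivial] at key
    have h1 : (H *ᵥ u) ⬝ᵥ (H⁻¹ *ᵥ g) = C := by rw [hsym, hHI, hC]
    have h2 : g ⬝ᵥ u = C := by rw [dotProduct_comm, hC]
    have h3 : (H *ᵥ u) ⬝ᵥ u = A := by rw [hsym]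
    have expand : (g - (C / A) • (H *ᵥ u)) ⬝ᵥ (H⁻¹ *ᵥ (g - (C / A) • (H *ᵥ u)))
        = B - 2 * (C / A) * C + (C / A) ^ 2 * A := by
      rw [mulVec_sub, mulVec_smul, hIH]
      simp only [sub_dotProduct, dotProduct_sub, smul_dotProduct, dotProduct_smul,
        h1, h2, h3, smul_eq_mul]
      ring
    rw [expand] at key
    have e : A * (B - 2 * (C / A) * C + (C / A) ^ 2 * A) = A * B - C ^ 2 := by
      field_simp; ring
    nlinarith [mul_nonneg hApos.le key, e]

theorem strongly_convex_error_bound (d : ℕ) (L : (Fin d → ℝ) → ℝ)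
    (hL : ContDiff ℝ 2 L) (θs θh : Fin d → ℝ)
    (H : Matrix (Fin d) (Fin d) ℝ) (hH : H.PosDef)
    (hHess : ∀ θ ∈ segment ℝ θs θh, ∀ v : Fin d → ℝ,
      (1 / 3) * (v ⬝ᵥ H *ᵥ v) ≤ iteratedFDeriv ℝ 2 L θ ![v, v])
    (hopt : fderiv ℝ L θh (θh - θs) ≤ 0) :
    Real.sqrt ((θh - θs) ⬝ᵥ H *ᵥ (θh - θs)) ≤
      3 * Real.sqrt ((fun i => fderiv ℝ L θs (Pi.single i 1)) ⬝ᵥ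
        H⁻¹ *ᵥ (fun i => fderiv ℝ L θs (Pi.single i 1))) := by
  set u : Fin d → ℝ := θh - θs with hu
  set g : Fin d → ℝ := fun i => fderiv ℝ L θs (Pi.single i 1) with hg
  set A : ℝ := u ⬝ᵥ H *ᵥ u with hA
  set B : ℝ := g ⬝ᵥ H⁻¹ *ᵥ g with hB
  -- derivative of t ↦ ∇L(θs + t u)·u
  have hdL : ContDiff ℝ 1 (fderiv ℝ L) := hL.fderiv_right (by norm_num)
  have hc : ∀ t : ℝ, HasDerivAt (fun s : ℝ => θs + s • u) u t := by
    intro t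
    simpa using ((hasDerivAt_id t).smul_const u).const_add θs
  have hφ : ∀ t : ℝ, HasDerivAt (fun s : ℝ => fderiv ℝ L (θs + s • u) u)
      (iteratedFDeriv ℝ 2 L (θs + t • u) ![u, u]) t := by
    intro t
    have h1 : HasFDerivAt (fderiv ℝ L) (fderiv ℝ (fderiv ℝ L) (θs + t • u)) (θs + t • u) :=
      (hdL.differentiable one_ne_zero _).hasFDerivAt
    have h2 : HasDerivAt (fun s : ℝ => fderiv ℝ L (θs + s • u))
        (fderiv ℝ (fderiv ℝ L) (θs + t • u) u) t := h1.comp_hasDerivAt t (hc t)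
    have h3 := h2.clm_apply (hasDerivAt_const t u)
    rw [iteratedFDeriv_two_apply]
    simpa using h3
  have hseg : ∀ t ∈ Set.Icc (0:ℝ) 1, θs + t • u ∈ segment ℝ θs θh := by
    intro t ht
    rw [segment_eq_image']
    exact ⟨t, ht, rfl⟩
  set ψ : ℝ → ℝ := fun t => fderiv ℝ L (θs + t • u) u - (1 / 3 * A) * t with hψdef
  have hψ : ∀ t : ℝ, HasDerivAt ψ
      (iteratedFDeriv ℝ 2 L (θs + t • u) ![u, u] - 1 / 3 * A) t := by
    intro t
    have h4 : HasDerivAt (fun y : ℝ => 1 / 3 * A * y) (1 / 3 * A) t := by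
      simpa only [mul_one] using (hasDerivAt_id' t).const_mul (1 / 3 * A)
    exact (hφ t).sub h4
  have mono : MonotoneOn ψ (Set.Icc 0 1) := by
    apply monotoneOn_of_deriv_nonneg (convex_Icc 0 1)
    · have : Differentiable ℝ ψ := fun t => (hψ t).differentiableAt
      exact this.continuous.continuousOn
    · intro x _
      exact ((hψ x).differentiableAt).differentiableWithinAt
    · intro x hx
      rw [(hψ x).deriv]
      rw [interior_Icc] at hx
      have := hHess _ (hseg x (Set.Ioo_subset_Icc_self hx)) u
      linarith
  have h01 : ψ 0 ≤ ψ 1 :=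
    mono ⟨le_refl 0, zero_le_one⟩ ⟨zero_le_one, le_refl 1⟩ zero_le_one
  have hθh : θs + (1:ℝ) • u = θh := by
    rw [one_smul, hu]; abel
  have hφ1 : ψ 1 = fderiv ℝ L θh u - 1 / 3 * A := by
    show fderiv ℝ L (θs + (1:ℝ) • u) u - 1 / 3 * A * 1 = _
    rw [hθh, mul_one]
  have hφ0 : ψ 0 = fderiv ℝ L θs u := by
    rw [hψdef]; simp
  have key : 1 / 3 * A ≤ -(fderiv ℝ L θs u) := by
    rw [hφ0, hφ1] at h01
    linarith [hopt]
  have hfd : fderiv ℝ L θs u = u ⬝ᵥ g := by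
    have husum : u = ∑ i, u i • (Pi.single i 1 : Fin d → ℝ) := by
      have : ∀ i, u i • (Pi.single i 1 : Fin d → ℝ) = Pi.single i (u i) := by
        intro i
        rw [← Pi.single_smul, smul_eq_mul, mul_one]
      simp_rw [this]
      exact (Finset.univ_sum_single u).symm
    calc fderiv ℝ L θs u = fderiv ℝ L θs (∑ i, u i • (Pi.single i 1 : Fin d → ℝ)) := by rw [← husum]
    _ = ∑ i, u i * fderiv ℝ L θs (Pi.single i 1) := by
        rw [map_sum]
        simp
    _ = u ⬝ᵥ g := by simp [hg, dotProduct]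
  rw [hfd] at key
  have hcs : (u ⬝ᵥ g) ^ 2 ≤ A * B := cs_aux d H hH u g
  have hA0 : 0 ≤ A := by
    have := hH.posSemidef.dotProduct_mulVec_nonneg u
    rwa [star_trivial] at this
  have hB0 : 0 ≤ B := by
    have := hH.posSemidef.inv.dotProduct_mulVec_nonneg g
    rwa [star_trivial] at this
  have hAB : A ≤ 9 * B := by
    nlinarith [hcs, key, hA0, hB0, sq_nonneg (u ⬝ᵥ g)]
  calc Real.sqrt A ≤ Real.sqrt (9 * B) := Real.sqrt_le_sqrt hAB
  _ = 3 * Real.sqrt B := by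
      rw [show (9:ℝ) * B = 3 ^ 2 * B by ring, Real.sqrt_mul (by positivity) B,
        Real.sqrt_sq (by norm_num : (0:ℝ) ≤ 3)]
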